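/- Let C be a Hamiltonian cycle of a graph G on 5 vertices labeled 0,…,4 in cyclic order along C. If the pair (G,C) admits a representation and satisfies (P2), then there exists j ∈ ℤ/5 such that E(G) = E(C) ∪ {{j, j+2}, {j, j+3}} (indices mod 5); in particular G has exactly two chords of C and they share a common endpoint. -/

import Mathlib

open SimpleGraph

namespace ENPT

variable {β V W U : Type}

/-- A graph on a subset of `β`, modeled as a subgraph of the complete graph on `β`. -/
abbrev SubG (β : Type) := SimpleGraph.Subgraph (⊤ : SimpleGraph β)

/-- `H` is a path: connected, with at least one edge, and maximum degree 2. -/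
def IsPathSub (H : SubG β) : Prop :=
  H.Connected ∧ H.edgeSet.Nonempty ∧ ∀ v : β, (H.neighborSet v).ncard ≤ 2

/-- The split vertices of two subgraphs: vertices of degree at least 3 in their union. -/
def Split (P Q : SubG β) : Set β := {v | 3 ≤ ((P ⊔ Q).neighborSet v).ncard}

/-- Two subgraphs edge-intersect. -/
def EdgeInt (P Q : SubG β) : Prop := (P.edgeSet ∩ Q.edgeSet).Nonempty

lemma EdgeInt.symm {P Q : SubG β} (h : EdgeInt P Q) : EdgeInt Q P := by
  unfold EdgeInt at h ⊢; rwa [Set.inter_comm]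

lemma Split_comm (P Q : SubG β) : Split P Q = Split Q P := by
  unfold Split; rw [sup_comm]

/-- `P ∼ Q` : edge-intersecting and non-splitting. -/
def NonSplit (P Q : SubG β) : Prop := EdgeInt P Q ∧ Split P Q = ∅

lemma NonSplit.symm {P Q : SubG β} (h : NonSplit P Q) : NonSplit Q P :=
  ⟨h.1.symm, by rw [Split_comm]; exact h.2⟩

/-- The EPT graph of a family of paths. -/
def EPTg (Ps : V → SubG β) : SimpleGraph V where
  Adj u v := u ≠ v ∧ EdgeInt (Ps u) (Ps v)
  symm := ⟨fun u v h => ⟨Ne.symm h.1, h.2.symm⟩⟩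
  loopless := ⟨fun u h => h.1 rfl⟩

/-- The ENPT graph of a family of paths. -/
def ENPTg (Ps : V → SubG β) : SimpleGraph V where
  Adj u v := u ≠ v ∧ NonSplit (Ps u) (Ps v)
  symm := ⟨fun u v h => ⟨Ne.symm h.1, h.2.symm⟩⟩
  loopless := ⟨fun u h => h.1 rfl⟩

/-- `⟨T, Ps⟩` is a representation of the pair `(G, G')`. -/
structure IsRep (T : SubG β) (Ps : V → SubG β) (G G' : SimpleGraph V) : Prop where
  tree : T.coe.IsTree
  sub : ∀ v, Ps v ≤ T
  path : ∀ v, IsPathSub (Ps v)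
  ept : EPTg Ps = G
  enpt : ENPTg Ps = G'

/-- Property (P3) of a representation: no red edge-clique of size 3. -/
def SatP3 (Ps : V → SubG β) : Prop :=
  ¬ ∃ (e : Sym2 β) (p q r : V), p ≠ q ∧ p ≠ r ∧ q ≠ r ∧
    e ∈ (Ps p).edgeSet ∧ e ∈ (Ps q).edgeSet ∧ e ∈ (Ps r).edgeSet ∧
    (Split (Ps p) (Ps q)).Nonempty ∧ (Split (Ps p) (Ps r)).Nonempty ∧
    (Split (Ps q) (Ps r)).Nonempty

/-- The map merging `q` into `p`. -/
def mergeMap [DecidableEq V] (p q : V) : V → V := fun x => if x = q then p else x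

/-- The image of a subgraph under the merge of `b` into `a` (contraction of `{a,b}`). -/
def cImage [DecidableEq β] (a b : β) (H : SubG β) : SubG β where
  verts := mergeMap a b '' H.verts
  Adj x y := x ≠ y ∧ ∃ x' y', H.Adj x' y' ∧ x = mergeMap a b x' ∧ y = mergeMap a b y'
  adj_sub := by
    rintro x y ⟨h, -⟩
    exact h
  edge_vert := by
    rintro x y ⟨h, x', y', hadj, rfl, rfl⟩
    exact ⟨x', H.edge_vert hadj, rfl⟩
  symm := by
    refine ⟨?_⟩
    rintro x y ⟨h, x', y', hadj, rfl, rfl⟩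
    exact ⟨h.symm, y', x', hadj.symm, rfl, rfl⟩

/-- Delete from `H` the vertex `x` and all edges at `x` (used for tail removal). -/
def delTail (x : β) (H : SubG β) : SubG β where
  verts := H.verts \ {x}
  Adj u w := H.Adj u w ∧ u ≠ x ∧ w ≠ x
  adj_sub := fun h => H.adj_sub h.1
  edge_vert := by
    rintro u w ⟨h, hu, hw⟩
    exact ⟨H.edge_vert h, by simpa using hu⟩
  symm := by
    refine ⟨?_⟩
    rintro u w ⟨h, hu, hw⟩
    exact ⟨h.symm, hw, hu⟩

/-- A pair `⟨tree, family of paths⟩`. -/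
structure Rep (β V : Type) where
  T : SubG β
  P : V → SubG β

/-- Well-formedness: the tree is a tree and each member of the family is a path of it. -/
def Rep.WF (R : Rep β V) : Prop :=
  R.T.coe.IsTree ∧ (∀ v, R.P v ≤ R.T) ∧ ∀ v, IsPathSub (R.P v)

/-- `R` is a representation of the pair `(G, G')`. -/
def Rep.IsRepOf (R : Rep β V) (G G' : SimpleGraph V) : Prop := IsRep R.T R.P G G'

/-- A single minifying operation: contraction of a tree edge, or removal of a tail of
one of the paths. -/
inductive MinifyStep [DecidableEq β] [DecidableEq V] : Rep β V → Rep β V → Prop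
  | contract (R : Rep β V) (a b : β) (hab : R.T.Adj a b)
      (hkeep : ∀ v, (cImage a b (R.P v)).edgeSet.Nonempty) :
      MinifyStep R ⟨cImage a b R.T, fun v => cImage a b (R.P v)⟩
  | tail (R : Rep β V) (v₀ : V) (x y : β) (hxy : (R.P v₀).Adj x y)
      (hdeg : ((R.P v₀).neighborSet x).ncard = 1)
      (htwo : 2 ≤ (R.P v₀).edgeSet.ncard) :
      MinifyStep R ⟨R.T, Function.update R.P v₀ (delTail x (R.P v₀))⟩

/-- A minimal representation of `(G, G')`: no single minifying operation yields again a
representation of `(G, G')`. -/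
def IsMinimalRep [DecidableEq β] [DecidableEq V] (T : SubG β) (Ps : V → SubG β)
    (G G' : SimpleGraph V) : Prop :=
  IsRep T Ps G G' ∧ ∀ R' : Rep β V, MinifyStep ⟨T, Ps⟩ R' → ¬ R'.IsRepOf G G'

/-- The cycle on `ZMod n`, vertices labeled in cyclic order. -/
def cycleG (n : ℕ) : SimpleGraph (ZMod n) :=
  SimpleGraph.fromRel (fun i j => j = i + 1)

/-- Property (P2) of a pair: no four vertices inducing a `K4` in `G` and a `P4` in `G'`. -/
def NoK4P4 (G G' : SimpleGraph V) : Prop :=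
  ¬ ∃ a b c d : V,
    G.Adj a b ∧ G.Adj a c ∧ G.Adj a d ∧ G.Adj b c ∧ G.Adj b d ∧ G.Adj c d ∧
    G'.Adj a b ∧ G'.Adj b c ∧ G'.Adj c d ∧ ¬G'.Adj a c ∧ ¬G'.Adj a d ∧ ¬G'.Adj b d

/-- The contraction `G/e` of the edge `e = {p,q}`, merging `q` into `p`,
realized on the vertex set `V ∖ {q}`. -/
def contrG [DecidableEq V] (G : SimpleGraph V) (p q : V) : SimpleGraph {x : V // x ≠ q} where
  Adj a b := a ≠ b ∧ ∃ x y : V, G.Adj x y ∧ (a : V) = mergeMap p q x ∧ (b : V) = mergeMap p q y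
  symm := by
    refine ⟨?_⟩
    rintro a b ⟨h, x, y, hxy, hx, hy⟩
    exact ⟨h.symm, y, x, hxy.symm, hy, hx⟩
  loopless := by refine ⟨?_⟩; rintro a ⟨h, -⟩; exact h rfl

/-- The contractibility condition for the edge `{p,q}` in the pair `(G,G')`:
no edge of `G'` sharing exactly one endpoint with `{p,q}` closes a triangle of `G`. -/
def ContractibleCond (G G' : SimpleGraph V) (p q : V) : Prop :=
  ∀ r : V, (G'.Adj p r → r ≠ q → ¬ G.Adj q r) ∧ (G'.Adj q r → r ≠ p → ¬ G.Adj p r)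

/-- `{p,q}` is a contractible edge of the pair `(G,G')`. -/
def ContractibleEdge (G G' : SimpleGraph V) (p q : V) : Prop :=
  G'.Adj p q ∧ ContractibleCond G G' p q

/-- `core` is a path between the two (distinct) endpoints `u` and `v`. -/
def IsPathBetween (core : SubG β) (u v : β) : Prop :=
  IsPathSub core ∧ u ∈ core.verts ∧ v ∈ core.verts ∧
    ∀ w ∈ core.verts, ((core.neighborSet w).ncard = 1 ↔ (w = u ∨ w = v))

/-- Delete a set of edges from a subgraph (keeping the vertices). -/
def delEdgesSub (H : SubG β) (s : Set (Sym2 β)) : SubG β where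
  verts := H.verts
  Adj x y := H.Adj x y ∧ s(x, y) ∉ s
  adj_sub := fun h => H.adj_sub h.1
  edge_vert := fun h => H.edge_vert h.1
  symm := by
    refine ⟨?_⟩
    rintro x y ⟨h, hs⟩
    refine ⟨h.symm, ?_⟩
    rwa [Sym2.eq_swap]

/-- The join of two graphs. -/
def joinG (H : SimpleGraph W) (K : SimpleGraph U) : SimpleGraph (W ⊕ U) where
  Adj x y :=
    match x, y with
    | Sum.inl a, Sum.inl b => H.Adj a b
    | Sum.inr a, Sum.inr b => K.Adj a b
    | Sum.inl _, Sum.inr _ => True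
    | Sum.inr _, Sum.inl _ => True
  symm := by
    refine ⟨?_⟩
    rintro (a | a) (b | b) h
    · exact h.symm
    · trivial
    · trivial
    · exact h.symm
  loopless := by
    refine ⟨?_⟩
    rintro (a | a) h
    · exact H.loopless.irrefl a h
    · exact K.loopless.irrefl a h

/-- The component graph `comp(G,C,K)`: vertices are the connected components of the
subgraph of `G` induced on the complement of `K`, two components being adjacent iff some
vertex of `K` is adjacent in `C` to both of them. -/
def compGraph (G C : SimpleGraph V) (K : Set V) :
    SimpleGraph (SimpleGraph.induce (Kᶜ : Set V) G).ConnectedComponent where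
  Adj A B := A ≠ B ∧ ∃ v ∈ K, ∃ a b : (Kᶜ : Set V),
    C.Adj v (a : V) ∧ C.Adj v (b : V) ∧
    (SimpleGraph.induce (Kᶜ : Set V) G).connectedComponentMk a = A ∧
    (SimpleGraph.induce (Kᶜ : Set V) G).connectedComponentMk b = B
  symm := by
    refine ⟨?_⟩
    rintro A B ⟨h, v, hv, a, b, h1, h2, h3, h4⟩
    exact ⟨h.symm, v, hv, b, a, h2, h1, h4, h3⟩
  loopless := by refine ⟨?_⟩; rintro A ⟨h, -⟩; exact h rfl

/-- The map merging both endpoints of an edge into the smaller one. -/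
def minMerge [LinearOrder V] (a b : V) : V → V :=
  fun x => if x = a ∨ x = b then min a b else x

/-- Contraction of the edge `{a,b}` of a graph, the merged vertex being named
`min a b` (the other endpoint remains as an isolated vertex). -/
def contrMin [LinearOrder V] (G : SimpleGraph V) (a b : V) : SimpleGraph V where
  Adj x y := x ≠ y ∧ ∃ x' y', G.Adj x' y' ∧ x = minMerge a b x' ∧ y = minMerge a b y'
  symm := by
    refine ⟨?_⟩
    rintro x y ⟨h, x', y', hxy, hx, hy⟩
    exact ⟨h.symm, y', x', hxy.symm, hy, hx⟩
  loopless := by refine ⟨?_⟩; rintro x ⟨h, -⟩; exact h rfl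

/-- Simultaneous contraction in a pair of graphs. -/
def stepPair [LinearOrder V] (GG : SimpleGraph V × SimpleGraph V) (e : V × V) :
    SimpleGraph V × SimpleGraph V :=
  (contrMin GG.1 e.1 e.2, contrMin GG.2 e.1 e.2)

/-- Iterated contraction of a list of edges (given by their original names; `f` is the
accumulated merging map). -/
def contractGo [LinearOrder V] (f : V → V) (GG : SimpleGraph V × SimpleGraph V) :
    List (V × V) → SimpleGraph V × SimpleGraph V
  | [] => GG
  | e :: l => contractGo (minMerge (f e.1) (f e.2) ∘ f) (stepPair GG (f e.1, f e.2)) l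

/-- The iterated contraction is defined: at each step the image of the next edge is an
edge of the current second graph and is contractible in the current pair. -/
def DefinedGo [LinearOrder V] (f : V → V) (GG : SimpleGraph V × SimpleGraph V) :
    List (V × V) → Prop
  | [] => True
  | e :: l => (GG.2.Adj (f e.1) (f e.2) ∧ ContractibleCond GG.1 GG.2 (f e.1) (f e.2)) ∧
      DefinedGo (minMerge (f e.1) (f e.2) ∘ f) (stepPair GG (f e.1, f e.2)) l

section Toolkit

variable {β : Type}

/-- Two vertices are on the same side of the edge `g` of `T` : reachable avoiding `g`. -/
def Conn (T : SubG β) (g : Sym2 β) (u v : β) : Prop :=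
  ((T.spanningCoe.deleteEdges {g})).Reachable u v

lemma Conn.symm2 {T : SubG β} {g : Sym2 β} {u v : β} (h : Conn T g u v) : Conn T g v u :=
  Reachable.symm h

lemma Conn.trans2 {T : SubG β} {g : Sym2 β} {u v w : β} (h : Conn T g u v)
    (h' : Conn T g v w) : Conn T g u w := Reachable.trans h h'

/-- `g` separates the edges `e` and `f`. -/
def Sep (T : SubG β) (g e f : Sym2 β) : Prop :=
  ∀ ⦃u v : β⦄, u ∈ e → v ∈ f → ¬ Conn T g u v

lemma edge_point (m : Sym2 β) : ∃ z, z ∈ m := by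
  induction m using Sym2.ind with
  | _ a b => exact ⟨a, Sym2.mem_mk_left a b⟩

lemma vert_of_edge {X : SubG β} {m : Sym2 β} (hm : m ∈ X.edgeSet) {z : β} (hz : z ∈ m) :
    z ∈ X.verts := by
  induction m using Sym2.ind with
  | _ a b =>
    have hadj : X.Adj a b := Subgraph.mem_edgeSet.mp hm
    rcases Sym2.mem_iff.mp hz with rfl | rfl
    · exact X.edge_vert hadj
    · exact X.edge_vert hadj.symm

lemma edgeSet_spanning (X : SubG β) : X.spanningCoe.edgeSet = X.edgeSet := by
  ext e
  induction e using Sym2.ind with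
  | _ a b => rfl

lemma spanning_reach {X : SubG β} (hX : X.Connected) {a b : β}
    (ha : a ∈ X.verts) (hb : b ∈ X.verts) : X.spanningCoe.Reachable a b := by
  have h := hX.coe ⟨a, ha⟩ ⟨b, hb⟩
  obtain ⟨w⟩ := h
  have : ∀ (x y : X.verts) (_ : X.coe.Walk x y), X.spanningCoe.Reachable x.1 y.1 := by
    intro x y w
    induction w with
    | nil => exact Reachable.refl _
    | cons h p ih =>
      rw [Subgraph.coe_adj] at h
      exact Reachable.trans (SimpleGraph.Adj.reachable (G := X.spanningCoe) h) ih
  exact this _ _ w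

lemma mem_support_of_edge {Γ : SimpleGraph β} {u v x : β} {q : Γ.Walk u v} {m : Sym2 β}
    (hm : m ∈ q.edges) (hx : x ∈ m) : x ∈ q.support := by
  induction m using Sym2.ind with
  | _ a b =>
    rcases Sym2.mem_iff.mp hx with rfl | rfl
    · exact q.fst_mem_support_of_mem_edges hm
    · exact q.snd_mem_support_of_mem_edges hm

lemma trim [DecidableEq β] {Γ : SimpleGraph β} {u v z : β} (p : Γ.Walk u v) (hp : p.IsPath)
    (hz : z ∈ p.support) (hzv : z ≠ v) :
    ∃ q : Γ.Walk u z, q.IsPath ∧ q.edges ⊆ p.edges ∧ ∀ m ∈ q.edges, v ∉ m := by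
  refine ⟨p.takeUntil z hz, hp.takeUntil hz, p.edges_takeUntil_subset hz, ?_⟩
  intro m hm hvm
  have hvs : v ∈ (p.takeUntil z hz).support := mem_support_of_edge hm hvm
  have hspec := p.take_spec hz
  have hnd := hp.support_nodup
  rw [← hspec, Walk.support_append] at hnd
  have hdisj := List.disjoint_of_nodup_append hnd
  have hv2 : v ∈ (p.dropUntil z hz).support.tail := by
    have hvd : v ∈ (p.dropUntil z hz).support := Walk.end_mem_support _
    rw [Walk.support_eq_cons] at hvd
    rcases List.mem_cons.mp hvd with h | h
    · exact absurd h.symm hzv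
    · exact h
  exact hdisj hvs hv2

lemma conn_of_walk {T X : SubG β} (hXT : X ≤ T) {g : Sym2 β} {u v : β}
    (p : X.spanningCoe.Walk u v) (hpg : g ∉ p.edges) : Conn T g u v := by
  refine ⟨p.transfer _ ?_⟩
  intro e he
  have heX : e ∈ X.edgeSet := by
    have := p.edges_subset_edgeSet he
    rwa [edgeSet_spanning] at this
  rw [edgeSet_deleteEdges]
  refine ⟨?_, ?_⟩
  · rw [edgeSet_spanning]
    exact Subgraph.edgeSet_mono hXT heX
  · simp only [Set.mem_singleton_iff]
    rintro rfl
    exact hpg he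

lemma sameSide_of_connected {T X : SubG β} (hXT : X ≤ T) (hX : X.Connected)
    {g : Sym2 β} (hg : g ∉ X.edgeSet) {u v : β} (hu : u ∈ X.verts) (hv : v ∈ X.verts) :
    Conn T g u v := by
  obtain ⟨w⟩ := spanning_reach hX hu hv
  refine conn_of_walk hXT w ?_
  intro hmem
  apply hg
  have := w.edges_subset_edgeSet hmem
  rwa [edgeSet_spanning] at this

lemma tree_reach {T : SubG β} (htree : T.coe.IsTree) {u v : β}
    (hu : u ∈ T.verts) (hv : v ∈ T.verts) : T.spanningCoe.Reachable u v :=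
  spanning_reach ⟨htree.isConnected⟩ hu hv

lemma bridge_not_conn {T : SubG β} (htree : T.coe.IsTree) {a b : β} (hab : T.Adj a b) :
    ¬ Conn T s(a, b) a b := by
  intro hconn
  have ha : a ∈ T.verts := T.edge_vert hab
  have hb : b ∈ T.verts := T.edge_vert hab.symm
  have hcoe : T.coe.Adj ⟨a, ha⟩ ⟨b, hb⟩ := by rw [Subgraph.coe_adj]; exact hab
  have hbr := (isAcyclic_iff_forall_adj_isBridge.mp htree.IsAcyclic) hcoe
  rw [isBridge_iff] at hbr
  apply hbr
  obtain ⟨w⟩ := hconn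
  have lift : ∀ {u v : β} (_ : (T.spanningCoe.deleteEdges {s(a, b)}).Walk u v)
      (hu : u ∈ T.verts) (hv : v ∈ T.verts),
      (T.coe \ SimpleGraph.fromEdgeSet {s((⟨a, ha⟩ : T.verts), (⟨b, hb⟩ : T.verts))}).Reachable
        ⟨u, hu⟩ ⟨v, hv⟩ := by
    intro u v w
    induction w with
    | nil =>
      intro hu hv
      exact Reachable.refl _
    | @cons x y z hadj p ih =>
      intro hu hv
      rw [SimpleGraph.deleteEdges_adj] at hadj
      obtain ⟨hadj1, hadj2⟩ := hadj
      have hy : y ∈ T.verts := T.edge_vert (Subgraph.Adj.symm hadj1)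
      refine Reachable.trans (SimpleGraph.Adj.reachable ?_) (ih hy hv)
      rw [SimpleGraph.sdiff_adj]
      constructor
      · rw [Subgraph.coe_adj]; exact hadj1
      · rw [SimpleGraph.fromEdgeSet_adj]
        rintro ⟨hmem, -⟩
        apply hadj2
        rw [Set.mem_singleton_iff] at hmem ⊢
        have := congrArg (Sym2.map (Subtype.val : T.verts → β)) hmem
        simpa using this
  exact lift w ha hb

lemma reach_endpoint [DecidableEq β] {X : SubG β} (hXc : X.Connected) {u a b : β}
    (hu : u ∈ X.verts) (hf : s(a, b) ∈ X.edgeSet) :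
    ∃ (x : β) (q : X.spanningCoe.Walk u x), (x = a ∨ x = b) ∧ q.IsPath ∧ s(a, b) ∉ q.edges := by
  have hadj : X.Adj a b := Subgraph.mem_edgeSet.mp hf
  have hne : a ≠ b := by
    intro h
    exact (X.adj_sub hadj).ne h
  have ha : a ∈ X.verts := X.edge_vert hadj
  obtain ⟨w0⟩ := spanning_reach hXc hu ha
  have hpath : w0.bypass.IsPath := w0.bypass_isPath
  by_cases hbs : b ∈ w0.bypass.support
  · obtain ⟨q, hq0, hq1, hq2⟩ := trim w0.bypass hpath hbs (Ne.symm hne)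
    refine ⟨b, q, Or.inr rfl, hq0, ?_⟩
    intro hmem
    exact hq2 _ hmem (Sym2.mem_mk_left a b)
  · refine ⟨a, w0.bypass, Or.inl rfl, hpath, ?_⟩
    intro hmem
    exact hbs (mem_support_of_edge hmem (Sym2.mem_mk_right a b))

lemma cross [DecidableEq β] {T : SubG β} (htree : T.coe.IsTree) {a b : Sym2 β}
    (haT : a ∈ T.edgeSet) (hbT : b ∈ T.edgeSet) (hab : a ≠ b)
    {u : β} (hu : u ∈ T.verts) {b₁ : β} (hb₁ : b₁ ∈ b)
    (h : ¬ Conn T a u b₁) {a₁ : β} (ha₁ : a₁ ∈ a) : Conn T b u a₁ := by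
  have ha₁T : a₁ ∈ T.verts := vert_of_edge haT ha₁
  obtain ⟨w0⟩ := tree_reach htree hu ha₁T
  set p := w0.bypass with hpdef
  have hpath : p.IsPath := w0.bypass_isPath
  have hsub : ∀ e ∈ p.edges, e ∈ T.edgeSet := by
    intro e he
    have := p.edges_subset_edgeSet he
    rwa [edgeSet_spanning] at this
  by_cases hbp : b ∈ p.edges
  · exfalso
    obtain ⟨b₂, hb2⟩ := Sym2.mem_iff_exists.mp hb₁
    subst hb2
    have hbne : b₁ ≠ b₂ := by
      have h2 : T.Adj b₁ b₂ := Subgraph.mem_edgeSet.mp hbT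
      exact (T.adj_sub h2).ne
    by_cases hba : b₁ = a₁
    · -- use b₂ instead
      have hb₂s : b₂ ∈ p.support := p.snd_mem_support_of_mem_edges hbp
      have hb₂a : b₂ ≠ a₁ := by rw [← hba]; exact Ne.symm hbne
      obtain ⟨q, hq0, hq1, hq2⟩ := trim p hpath hb₂s hb₂a
      have hqa : a ∉ q.edges := fun hm => hq2 _ hm ha₁
      have c1 : Conn T a u b₂ := conn_of_walk (le_refl T) (q.transfer T.spanningCoe
        (fun e he => by rw [edgeSet_spanning]; exact hsub e (hq1 he))) (by
          rw [Walk.edges_transfer]; exact hqa)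
      have c2 : Conn T a b₂ b₁ := by
        refine ⟨Walk.cons ?_ Walk.nil⟩
        rw [SimpleGraph.deleteEdges_adj]
        refine ⟨?_, ?_⟩
        · exact (Subgraph.mem_edgeSet.mp hbT).symm
        · simp only [Set.mem_singleton_iff]
          intro hh
          exact hab (hh.symm.trans (Sym2.eq_swap))
      exact h (c1.trans2 c2)
    · have hb₁s : b₁ ∈ p.support := p.fst_mem_support_of_mem_edges hbp
      obtain ⟨q, hq0, hq1, hq2⟩ := trim p hpath hb₁s hba
      have hqa : a ∉ q.edges := fun hm => hq2 _ hm ha₁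
      have c1 : Conn T a u b₁ := conn_of_walk (le_refl T) (q.transfer T.spanningCoe
        (fun e he => by rw [edgeSet_spanning]; exact hsub e (hq1 he))) (by
          rw [Walk.edges_transfer]; exact hqa)
      exact h c1
  · exact conn_of_walk (le_refl T) p hbp

lemma sep_trans [DecidableEq β] {T : SubG β} (htree : T.coe.IsTree) {a b x y : Sym2 β}
    (haT : a ∈ T.edgeSet) (hbT : b ∈ T.edgeSet) (hxT : x ∈ T.edgeSet) (hyT : y ∈ T.edgeSet)
    (hab : a ≠ b)
    (h1 : Sep T a x b) (h2 : Sep T b a y) : Sep T a x y := by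
  intro u v hux hvy hconn
  obtain ⟨b₁, hb₁⟩ := edge_point b
  obtain ⟨a₁, ha₁⟩ := edge_point a
  have huT : u ∈ T.verts := vert_of_edge hxT hux
  have hvT : v ∈ T.verts := vert_of_edge hyT hvy
  have h3 : ¬ Conn T a u b₁ := h1 hux hb₁
  have h4 : ¬ Conn T a v b₁ := fun hc => h3 (hconn.trans2 hc)
  have c2 : Conn T b v a₁ := cross htree haT hbT hab hvT hb₁ h4 ha₁
  exact h2 ha₁ hvy c2.symm2

lemma three_le_ncard {s : Set β} [Fintype β] {y₁ y₂ y₃ : β}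
    (h1 : y₁ ∈ s) (h2 : y₂ ∈ s) (h3 : y₃ ∈ s)
    (d12 : y₁ ≠ y₂) (d13 : y₁ ≠ y₃) (d23 : y₂ ≠ y₃) : 3 ≤ s.ncard := by
  have hsub : ({y₁, y₂, y₃} : Set β) ⊆ s := by
    intro z hz
    rcases hz with rfl | rfl | rfl
    exacts [h1, h2, h3]
  have hcard : ({y₁, y₂, y₃} : Set β).ncard = 3 := by
    rw [Set.ncard_insert_of_notMem (by simp [d12, d13]) (Set.toFinite _),
      Set.ncard_insert_of_notMem (by simp [d23]) (Set.toFinite _), Set.ncard_singleton]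
  rw [← hcard]
  exact Set.ncard_le_ncard hsub (Set.toFinite _)

lemma three_edges [Fintype β] {X Y : SubG β}
    (hdeg : ∀ v : β, ((X ⊔ Y).neighborSet v).ncard ≤ 2)
    {x : β} {m₁ m₂ m₃ : Sym2 β}
    (h1 : m₁ ∈ X.edgeSet ∪ Y.edgeSet) (h2 : m₂ ∈ X.edgeSet ∪ Y.edgeSet)
    (h3 : m₃ ∈ X.edgeSet ∪ Y.edgeSet)
    (hx1 : x ∈ m₁) (hx2 : x ∈ m₂) (hx3 : x ∈ m₃)
    (d12 : m₁ ≠ m₂) (d13 : m₁ ≠ m₃) (d23 : m₂ ≠ m₃) : False := by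
  have hsup : ∀ {m : Sym2 β}, m ∈ X.edgeSet ∪ Y.edgeSet → m ∈ (X ⊔ Y).edgeSet := by
    intro m hm
    induction m using Sym2.ind with
    | _ a b =>
      rw [Subgraph.mem_edgeSet, Subgraph.sup_adj]
      rcases hm with hm | hm
      · exact Or.inl (Subgraph.mem_edgeSet.mp hm)
      · exact Or.inr (Subgraph.mem_edgeSet.mp hm)
  obtain ⟨y₁, e1⟩ := Sym2.mem_iff_exists.mp hx1
  obtain ⟨y₂, e2⟩ := Sym2.mem_iff_exists.mp hx2
  obtain ⟨y₃, e3⟩ := Sym2.mem_iff_exists.mp hx3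
  subst e1; subst e2; subst e3
  have a1 : (X ⊔ Y).Adj x y₁ := Subgraph.mem_edgeSet.mp (hsup h1)
  have a2 : (X ⊔ Y).Adj x y₂ := Subgraph.mem_edgeSet.mp (hsup h2)
  have a3 : (X ⊔ Y).Adj x y₃ := Subgraph.mem_edgeSet.mp (hsup h3)
  have hy12 : y₁ ≠ y₂ := fun h => d12 (by rw [h])
  have hy13 : y₁ ≠ y₃ := fun h => d13 (by rw [h])
  have hy23 : y₂ ≠ y₃ := fun h => d23 (by rw [h])
  have := three_le_ncard (s := (X ⊔ Y).neighborSet x) a1 a2 a3 hy12 hy13 hy23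
  have h2 := hdeg x
  omega

lemma div_aux [Fintype β] {X Y : SubG β}
    (hdeg : ∀ v : β, ((X ⊔ Y).neighborSet v).ncard ≤ 2)
    {e h : Sym2 β} (heX : e ∈ X.edgeSet) (heY : e ∉ Y.edgeSet)
    (hhY : h ∈ Y.edgeSet) (hhX : h ∉ X.edgeSet) :
    ∀ {x u : β} (p : X.spanningCoe.Walk x u), p.IsPath →
    ∀ {w : β} (q : Y.spanningCoe.Walk x w), q.IsPath →
    ∀ (f : Sym2 β), f ∈ X.edgeSet → f ∈ Y.edgeSet → x ∈ f →
      f ∉ p.edges → f ∉ q.edges → u ∈ e → w ∈ h → False := by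
  have hXsub : ∀ {a b : β} (p : X.spanningCoe.Walk a b) {m}, m ∈ p.edges → m ∈ X.edgeSet := by
    intro a b p m hm
    have := p.edges_subset_edgeSet hm
    rwa [edgeSet_spanning] at this
  have hYsub : ∀ {a b : β} (q : Y.spanningCoe.Walk a b) {m}, m ∈ q.edges → m ∈ Y.edgeSet := by
    intro a b q m hm
    have := q.edges_subset_edgeSet hm
    rwa [edgeSet_spanning] at this
  intro x u p
  induction p with
  | nil =>
    rename_i x0
    intro hp w q hq f hfX hfY hxf hpf hqf hue hwh
    cases q with
    | nil =>
      exact three_edges hdeg (Or.inl heX) (Or.inl hfX) (Or.inr hhY) hue hxf hwh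
        (fun hh => heY (hh ▸ hfY)) (fun hh => hhX (hh ▸ heX)) (fun hh => hhX (hh ▸ hfX))
    | @cons _ z _ hadj2 q' =>
      have hqe : s(x0, z) ∈ (Walk.cons hadj2 q').edges := by
        rw [Walk.edges_cons]; exact List.mem_cons_self
      have hmY : s(x0, z) ∈ Y.edgeSet := hYsub _ hqe
      exact three_edges hdeg (Or.inl heX) (Or.inl hfX) (Or.inr hmY) hue hxf
        (Sym2.mem_mk_left x0 z)
        (fun hh => heY (hh ▸ hfY)) (fun hh => heY (hh ▸ hmY)) (fun hh => hqf (hh ▸ hqe))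
  | @cons x z u hadj p' ih =>
    intro hp w q hq f hfX hfY hxf hpf hqf hue hwh
    have hp'path : p'.IsPath := ((Walk.cons_isPath_iff hadj p').mp hp).1
    have hxns : x ∉ p'.support := ((Walk.cons_isPath_iff hadj p').mp hp).2
    have hpe : s(x, z) ∈ (Walk.cons hadj p').edges := by
      rw [Walk.edges_cons]; exact List.mem_cons_self
    have hmX : s(x, z) ∈ X.edgeSet := hXsub _ hpe
    cases q with
    | nil =>
      exact three_edges hdeg (Or.inr hhY) (Or.inl hfX) (Or.inl hmX) hwh hxf
        (Sym2.mem_mk_left x z)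
        (fun hh => hhX (hh ▸ hfX)) (fun hh => hhX (hh ▸ hmX)) (fun hh => hpf (hh ▸ hpe))
    | @cons _ z₂ _ hadj2 q' =>
      have hq'path : q'.IsPath := ((Walk.cons_isPath_iff hadj2 q').mp hq).1
      have hxns2 : x ∉ q'.support := ((Walk.cons_isPath_iff hadj2 q').mp hq).2
      have hqe : s(x, z₂) ∈ (Walk.cons hadj2 q').edges := by
        rw [Walk.edges_cons]; exact List.mem_cons_self
      have hmY : s(x, z₂) ∈ Y.edgeSet := hYsub _ hqe
      by_cases hzz : z = z₂
      · subst hzz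
        refine ih hp'path q' hq'path s(x, z) hmX hmY (Sym2.mem_mk_right x z) ?_ ?_ hue hwh
        · intro hmem
          exact hxns (mem_support_of_edge hmem (Sym2.mem_mk_left x z))
        · intro hmem
          exact hxns2 (mem_support_of_edge hmem (Sym2.mem_mk_left x z))
      · have hne1 : f ≠ s(x, z) := fun hh => hpf (hh ▸ hpe)
        have hne2 : f ≠ s(x, z₂) := fun hh => hqf (hh ▸ hqe)
        have hne3 : s(x, z) ≠ s(x, z₂) := by
          intro hh
          rcases Sym2.eq_iff.mp hh with ⟨-, h2⟩ | ⟨h1, h2⟩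
          · exact hzz h2
          · exact hzz (h2.trans h1)
        exact three_edges hdeg (Or.inl hfX) (Or.inl hmX) (Or.inr hmY) hxf
          (Sym2.mem_mk_left x z) (Sym2.mem_mk_left x z₂) hne1 hne2 hne3

lemma sep_of_overlap [Fintype β] [DecidableEq β] {T X Y : SubG β} (htree : T.coe.IsTree)
    (hXT : X ≤ T) (hYT : Y ≤ T) (hXc : X.Connected) (hYc : Y.Connected)
    (hdeg : ∀ v : β, ((X ⊔ Y).neighborSet v).ncard ≤ 2)
    {e f h : Sym2 β} (heX : e ∈ X.edgeSet) (heY : e ∉ Y.edgeSet)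
    (hhY : h ∈ Y.edgeSet) (hhX : h ∉ X.edgeSet)
    (hfX : f ∈ X.edgeSet) (hfY : f ∈ Y.edgeSet) :
    Sep T f e h := by
  induction f using Sym2.ind with
  | _ a b =>
    intro u w hue hwh hconn
    have hu : u ∈ X.verts := vert_of_edge heX hue
    have hw : w ∈ Y.verts := vert_of_edge hhY hwh
    obtain ⟨x₁, p, hx1, hp, hpf⟩ := reach_endpoint hXc hu hfX
    obtain ⟨x₂, q, hx2, hq, hqf⟩ := reach_endpoint hYc hw hfY
    by_cases hxx : x₁ = x₂
    · subst hxx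
      have hx1f : x₁ ∈ s(a, b) := by
        rcases hx1 with rfl | rfl
        · exact Sym2.mem_mk_left _ _
        · exact Sym2.mem_mk_right _ _
      refine div_aux hdeg heX heY hhY hhX p.reverse hp.reverse q.reverse hq.reverse
        s(a, b) hfX hfY hx1f ?_ ?_ hue hwh
      · rw [Walk.edges_reverse, List.mem_reverse]; exact hpf
      · rw [Walk.edges_reverse, List.mem_reverse]; exact hqf
    · have c1 : Conn T s(a, b) x₁ u := (conn_of_walk hXT p hpf).symm2
      have c2 : Conn T s(a, b) w x₂ := conn_of_walk hYT q hqf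
      have c3 : Conn T s(a, b) x₁ x₂ := (c1.trans2 hconn).trans2 c2
      have hTadj : T.Adj a b := Subgraph.mem_edgeSet.mp (Subgraph.edgeSet_mono hXT hfX)
      have hbr := bridge_not_conn htree hTadj
      rcases hx1 with rfl | rfl <;> rcases hx2 with rfl | rfl
      · exact hxx rfl
      · exact hbr c3
      · exact hbr c3.symm2
      · exact hxx rfl

lemma keyU [Fintype β] [DecidableEq β] {T : SubG β} (htree : T.coe.IsTree)
    {R0 R2 R3 R4 : SubG β}
    (h0T : R0 ≤ T) (h2T : R2 ≤ T) (h3T : R3 ≤ T) (h4T : R4 ≤ T)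
    (h0c : R0.Connected) (h2c : R2.Connected) (h3c : R3.Connected) (h4c : R4.Connected)
    (hdeg23 : ∀ v : β, ((R2 ⊔ R3).neighborSet v).ncard ≤ 2)
    (hdeg34 : ∀ v : β, ((R3 ⊔ R4).neighborSet v).ncard ≤ 2)
    (hint02 : (R0.edgeSet ∩ R2.edgeSet).Nonempty)
    (hint23 : (R2.edgeSet ∩ R3.edgeSet).Nonempty)
    (hint34 : (R3.edgeSet ∩ R4.edgeSet).Nonempty)
    (hint40 : (R4.edgeSet ∩ R0.edgeSet).Nonempty)
    (hdis24 : R2.edgeSet ∩ R4.edgeSet = ∅)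
    (hdis30 : R3.edgeSet ∩ R0.edgeSet = ∅) : False := by
  obtain ⟨uu, hu0, hu2⟩ := hint02
  obtain ⟨o2, ho22, ho23⟩ := hint23
  obtain ⟨o3, ho33, ho34⟩ := hint34
  obtain ⟨o4, ho44, ho40⟩ := hint40
  have dis24 : ∀ {m : Sym2 β}, m ∈ R2.edgeSet → m ∈ R4.edgeSet → False := by
    intro m h1 h2
    have : m ∈ R2.edgeSet ∩ R4.edgeSet := ⟨h1, h2⟩
    rw [hdis24] at this
    exact this
  have dis30 : ∀ {m : Sym2 β}, m ∈ R3.edgeSet → m ∈ R0.edgeSet → False := by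
    intro m h1 h2
    have : m ∈ R3.edgeSet ∩ R0.edgeSet := ⟨h1, h2⟩
    rw [hdis30] at this
    exact this
  have sep1 : Sep T o2 uu o3 :=
    sep_of_overlap htree h2T h3T h2c h3c hdeg23 hu2 (fun hx => dis30 hx hu0)
      ho33 (fun hx => dis24 hx ho34) ho22 ho23
  have sep2 : Sep T o3 o2 o4 :=
    sep_of_overlap htree h3T h4T h3c h4c hdeg34 ho23 (fun hx => dis24 ho22 hx)
      ho44 (fun hx => dis30 hx ho40) ho33 ho34
  have hne23 : o2 ≠ o3 := by
    rintro rfl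
    exact dis24 ho22 ho34
  have sep3 : Sep T o2 uu o4 :=
    sep_trans htree (Subgraph.edgeSet_mono h2T ho22) (Subgraph.edgeSet_mono h3T ho33)
      (Subgraph.edgeSet_mono h0T hu0) (Subgraph.edgeSet_mono h4T ho44) hne23 sep1 sep2
  have ho2n0 : o2 ∉ R0.edgeSet := fun hx => dis30 ho23 hx
  obtain ⟨u₁, hu₁⟩ := edge_point uu
  obtain ⟨v₁, hv₁⟩ := edge_point o4
  exact sep3 hu₁ hv₁ (sameSide_of_connected h0T h0c ho2n0
    (vert_of_edge hu0 hu₁) (vert_of_edge ho40 hv₁))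

lemma key5 [Fintype β] [DecidableEq β] {T : SubG β} (htree : T.coe.IsTree)
    {R0 R1 R2 R3 R4 : SubG β}
    (h0T : R0 ≤ T) (h1T : R1 ≤ T) (h2T : R2 ≤ T) (h3T : R3 ≤ T) (h4T : R4 ≤ T)
    (h0c : R0.Connected) (h1c : R1.Connected) (h2c : R2.Connected) (h3c : R3.Connected)
    (h4c : R4.Connected)
    (hdeg12 : ∀ v : β, ((R1 ⊔ R2).neighborSet v).ncard ≤ 2)
    (hdeg23 : ∀ v : β, ((R2 ⊔ R3).neighborSet v).ncard ≤ 2)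
    (hdeg34 : ∀ v : β, ((R3 ⊔ R4).neighborSet v).ncard ≤ 2)
    (hint01 : (R0.edgeSet ∩ R1.edgeSet).Nonempty)
    (hint12 : (R1.edgeSet ∩ R2.edgeSet).Nonempty)
    (hint23 : (R2.edgeSet ∩ R3.edgeSet).Nonempty)
    (hint34 : (R3.edgeSet ∩ R4.edgeSet).Nonempty)
    (hint40 : (R4.edgeSet ∩ R0.edgeSet).Nonempty)
    (hdis02 : R0.edgeSet ∩ R2.edgeSet = ∅)
    (hdis13 : R1.edgeSet ∩ R3.edgeSet = ∅)
    (hdis24 : R2.edgeSet ∩ R4.edgeSet = ∅)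
    (hdis30 : R3.edgeSet ∩ R0.edgeSet = ∅) : False := by
  obtain ⟨o0, ho00, ho01⟩ := hint01
  obtain ⟨o1, ho11, ho12⟩ := hint12
  obtain ⟨o2, ho22, ho23⟩ := hint23
  obtain ⟨o3, ho33, ho34⟩ := hint34
  obtain ⟨o4, ho44, ho40⟩ := hint40
  have dis02 : ∀ {m : Sym2 β}, m ∈ R0.edgeSet → m ∈ R2.edgeSet → False := by
    intro m h1 h2
    have : m ∈ R0.edgeSet ∩ R2.edgeSet := ⟨h1, h2⟩
    rw [hdis02] at this; exact this
  have dis13 : ∀ {m : Sym2 β}, m ∈ R1.edgeSet → m ∈ R3.edgeSet → False := by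
    intro m h1 h2
    have : m ∈ R1.edgeSet ∩ R3.edgeSet := ⟨h1, h2⟩
    rw [hdis13] at this; exact this
  have dis24 : ∀ {m : Sym2 β}, m ∈ R2.edgeSet → m ∈ R4.edgeSet → False := by
    intro m h1 h2
    have : m ∈ R2.edgeSet ∩ R4.edgeSet := ⟨h1, h2⟩
    rw [hdis24] at this; exact this
  have dis30 : ∀ {m : Sym2 β}, m ∈ R3.edgeSet → m ∈ R0.edgeSet → False := by
    intro m h1 h2
    have : m ∈ R3.edgeSet ∩ R0.edgeSet := ⟨h1, h2⟩
    rw [hdis30] at this; exact this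
  have sepA : Sep T o1 o0 o2 :=
    sep_of_overlap htree h1T h2T h1c h2c hdeg12 ho01 (fun hx => dis02 ho00 hx)
      ho22 (fun hx => dis13 hx ho23) ho11 ho12
  have sepB : Sep T o2 o1 o3 :=
    sep_of_overlap htree h2T h3T h2c h3c hdeg23 ho12 (fun hx => dis13 ho11 hx)
      ho33 (fun hx => dis24 hx ho34) ho22 ho23
  have sepC : Sep T o3 o2 o4 :=
    sep_of_overlap htree h3T h4T h3c h4c hdeg34 ho23 (fun hx => dis24 ho22 hx)
      ho44 (fun hx => dis30 hx ho40) ho33 ho34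
  have hne12 : o1 ≠ o2 := by
    rintro rfl
    exact dis13 ho11 ho23
  have hne13 : o1 ≠ o3 := by
    rintro rfl
    exact dis13 ho11 ho33
  have sepD : Sep T o1 o0 o3 :=
    sep_trans htree (Subgraph.edgeSet_mono h1T ho11) (Subgraph.edgeSet_mono h2T ho22)
      (Subgraph.edgeSet_mono h0T ho00) (Subgraph.edgeSet_mono h3T ho33) hne12 sepA sepB
  -- sepC' : Sep T o3 o1 o4
  have ho3n2 : o3 ∉ R2.edgeSet := fun hx => dis24 hx ho34
  have sepC' : Sep T o3 o1 o4 := by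
    intro u v hu1 hv4 hconn
    obtain ⟨w₂, hw₂⟩ := edge_point o2
    have hside : Conn T o3 w₂ u := sameSide_of_connected h2T h2c ho3n2
      (vert_of_edge ho22 hw₂) (vert_of_edge ho12 hu1)
    exact sepC hw₂ hv4 (hside.trans2 hconn)
  have sepE : Sep T o1 o0 o4 :=
    sep_trans htree (Subgraph.edgeSet_mono h1T ho11) (Subgraph.edgeSet_mono h3T ho33)
      (Subgraph.edgeSet_mono h0T ho00) (Subgraph.edgeSet_mono h4T ho44) hne13 sepD sepC'
  have ho1n0 : o1 ∉ R0.edgeSet := fun hx => dis02 hx ho12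
  obtain ⟨u₁, hu₁⟩ := edge_point o0
  obtain ⟨v₁, hv₁⟩ := edge_point o4
  exact sepE hu₁ hv₁ (sameSide_of_connected h0T h0c ho1n0
    (vert_of_edge ho00 hu₁) (vert_of_edge ho40 hv₁))

end Toolkit

/-- a representable pair `(G, C₅)` satisfying (P2) has exactly two chords,
sharing a common endpoint: `E(G) = E(C) ∪ {{j,j+2},{j,j+3}}` for some `j`. -/
theorem stmt7 (G : SimpleGraph (ZMod 5)) (hC : cycleG 5 ≤ G)
    (hrep : ∃ (β : Type) (_ : Fintype β) (T : SubG β) (Ps : ZMod 5 → SubG β),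
        IsRep T Ps G (cycleG 5))
    (hP2 : NoK4P4 G (cycleG 5)) :
    ∃ j : ZMod 5, ∀ x y : ZMod 5,
      G.Adj x y ↔ ((cycleG 5).Adj x y ∨ s(x, y) = s(j, j + 2) ∨ s(x, y) = s(j, j + 3)) := by
  classical
  obtain ⟨β, hfin, T, Ps, hR⟩ := hrep
  haveI := hfin
  have htree := hR.tree
  have hsubT := hR.sub
  have hconn : ∀ i, (Ps i).Connected := fun i => (hR.path i).1
  -- arithmetic facts in ZMod 5
  have hzne1 : ∀ i : ZMod 5, i ≠ i + 1 := by decide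
  have hzne2 : ∀ i : ZMod 5, i ≠ i + 2 := by decide
  have z11 : ∀ i : ZMod 5, i + 1 + 1 = i + 2 := by decide
  have z12 : ∀ i : ZMod 5, i + 1 + 2 = i + 3 := by decide
  have z13 : ∀ i : ZMod 5, i + 1 + 3 = i + 4 := by decide
  have z14 : ∀ i : ZMod 5, i + 1 + 4 = i := by decide
  have z221 : ∀ i : ZMod 5, i + 2 + 1 = i + 3 := by decide
  have z222 : ∀ i : ZMod 5, i + 2 + 2 = i + 4 := by decide
  have z23 : ∀ i : ZMod 5, i + 2 + 3 = i := by decide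
  have z331 : ∀ i : ZMod 5, i + 3 + 1 = i + 4 := by decide
  have z332 : ∀ i : ZMod 5, i + 3 + 2 = i := by decide
  have z334 : ∀ i : ZMod 5, i + 3 + 4 = i + 2 := by decide
  have z441 : ∀ i : ZMod 5, i + 4 + 1 = i := by decide
  have z442 : ∀ i : ZMod 5, i + 4 + 2 = i + 1 := by decide
  have z43 : ∀ i : ZMod 5, i + 4 + 3 = i + 2 := by decide
  -- cycle adjacency
  have hcycAdj : ∀ i : ZMod 5, (cycleG 5).Adj i (i + 1) := by
    intro i
    rw [cycleG, SimpleGraph.fromRel_adj]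
    exact ⟨hzne1 i, Or.inl rfl⟩
  have ncyc2 : ∀ i : ZMod 5, ¬ (cycleG 5).Adj i (i + 2) := by
    intro i hA
    rw [cycleG, SimpleGraph.fromRel_adj] at hA
    rcases hA.2 with hh | hh
    · exact (by decide : ∀ j : ZMod 5, ¬ j + 2 = j + 1) i hh
    · exact (by decide : ∀ j : ZMod 5, ¬ j = j + 2 + 1) i hh
  have ncyc3 : ∀ i : ZMod 5, ¬ (cycleG 5).Adj i (i + 3) := by
    intro i hA
    rw [cycleG, SimpleGraph.fromRel_adj] at hA
    rcases hA.2 with hh | hh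
    · exact (by decide : ∀ j : ZMod 5, ¬ j + 3 = j + 1) i hh
    · exact (by decide : ∀ j : ZMod 5, ¬ j = j + 3 + 1) i hh
  -- consecutive paths are ENPT-adjacent
  have hcons : ∀ i : ZMod 5, NonSplit (Ps i) (Ps (i + 1)) := by
    intro i
    have h := hcycAdj i
    rw [← hR.enpt] at h
    exact (show i ≠ i + 1 ∧ NonSplit (Ps i) (Ps (i + 1)) from h).2
  have hOv : ∀ i : ZMod 5, ((Ps i).edgeSet ∩ (Ps (i + 1)).edgeSet).Nonempty :=
    fun i => (hcons i).1
  have hdeg : ∀ i : ZMod 5, ∀ v : β, (((Ps i) ⊔ (Ps (i + 1))).neighborSet v).ncard ≤ 2 := by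
    intro i v
    by_contra hlt
    have h3 : 3 ≤ (((Ps i) ⊔ (Ps (i + 1))).neighborSet v).ncard := by omega
    have hmem : v ∈ Split (Ps i) (Ps (i + 1)) := h3
    rw [(hcons i).2] at hmem
    exact hmem
  -- chords
  have hchord : ∀ i : ZMod 5, G.Adj i (i + 2) ↔
      ((Ps i).edgeSet ∩ (Ps (i + 2)).edgeSet).Nonempty := by
    intro i
    rw [← hR.ept]
    exact ⟨fun h => (show i ≠ i + 2 ∧ EdgeInt (Ps i) (Ps (i + 2)) from h).2,
      fun h => (show i ≠ i + 2 ∧ EdgeInt (Ps i) (Ps (i + 2)) from ⟨hzne2 i, h⟩)⟩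
  have hnchord : ∀ i : ZMod 5, ¬ G.Adj i (i + 2) →
      (Ps i).edgeSet ∩ (Ps (i + 2)).edgeSet = ∅ := by
    intro i h
    by_contra hne
    exact h ((hchord i).mpr (Set.nonempty_iff_ne_empty.mpr hne))
  -- P2 consequence
  have hP2' : ∀ k : ZMod 5,
      ¬ (G.Adj k (k + 2) ∧ G.Adj (k + 1) (k + 1 + 2) ∧ G.Adj (k + 3) (k + 3 + 2)) := by
    rintro k ⟨h1, h2, h3⟩
    apply hP2
    refine ⟨k, k + 1, k + 2, k + 3, hC (hcycAdj k), h1, ?_, ?_, ?_, ?_,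
      hcycAdj k, ?_, ?_, ncyc2 k, ncyc3 k, ?_⟩
    · rw [z332] at h3
      exact h3.symm
    · have h := hC (hcycAdj (k + 1)); rwa [z11] at h
    · rwa [z12] at h2
    · have h := hC (hcycAdj (k + 2)); rwa [z221] at h
    · have h := hcycAdj (k + 1); rwa [z11] at h
    · have h := hcycAdj (k + 2); rwa [z221] at h
    · intro hA
      exact ncyc2 (k + 1) (by rw [z12]; exact hA)
  -- Lemma U : a chord at j forces a chord at j+2 or j+3
  have hRL2 : ∀ j : ZMod 5, G.Adj j (j + 2) → G.Adj (j + 2) (j + 4) ∨ G.Adj (j + 3) j := by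
    intro j hj
    by_contra hcon
    push_neg at hcon
    obtain ⟨hc2, hc3⟩ := hcon
    have hd24 : (Ps (j + 2)).edgeSet ∩ (Ps (j + 4)).edgeSet = ∅ := by
      have h := hnchord (j + 2) (fun hA => hc2 (by rwa [z222] at hA))
      rwa [z222] at h
    have hd30 : (Ps (j + 3)).edgeSet ∩ (Ps j).edgeSet = ∅ := by
      have h := hnchord (j + 3) (fun hA => hc3 (by rwa [z332] at hA))
      rwa [z332] at h
    have hi02 := (hchord j).mp hj
    have hi23 := hOv (j + 2); rw [z221] at hi23
    have hi34 := hOv (j + 3); rw [z331] at hi34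
    have hi40 := hOv (j + 4); rw [z441] at hi40
    have h23 := hdeg (j + 2); simp only [z221] at h23
    have h34 := hdeg (j + 3); simp only [z331] at h34
    exact keyU htree (hsubT j) (hsubT (j + 2)) (hsubT (j + 3)) (hsubT (j + 4))
      (hconn j) (hconn (j + 2)) (hconn (j + 3)) (hconn (j + 4)) h23 h34
      hi02 hi23 hi34 hi40 hd24 hd30
  -- at least one chord exists
  have hRL1 : ∃ i : ZMod 5, G.Adj i (i + 2) := by
    by_contra hno
    push_neg at hno
    have e01 : (0 : ZMod 5) + 1 = 1 := by decide
    have e11 : (1 : ZMod 5) + 1 = 2 := by decide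
    have e21 : (2 : ZMod 5) + 1 = 3 := by decide
    have e31 : (3 : ZMod 5) + 1 = 4 := by decide
    have e41 : (4 : ZMod 5) + 1 = 0 := by decide
    have e02 : (0 : ZMod 5) + 2 = 2 := by decide
    have e12 : (1 : ZMod 5) + 2 = 3 := by decide
    have e22 : (2 : ZMod 5) + 2 = 4 := by decide
    have e32 : (3 : ZMod 5) + 2 = 0 := by decide
    have hi01 := hOv 0; rw [e01] at hi01
    have hi12 := hOv 1; rw [e11] at hi12
    have hi23 := hOv 2; rw [e21] at hi23
    have hi34 := hOv 3; rw [e31] at hi34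
    have hi40 := hOv 4; rw [e41] at hi40
    have hd02 := hnchord 0 (hno 0); rw [e02] at hd02
    have hd13 := hnchord 1 (hno 1); rw [e12] at hd13
    have hd24 := hnchord 2 (hno 2); rw [e22] at hd24
    have hd30 := hnchord 3 (hno 3); rw [e32] at hd30
    have h12 := hdeg 1; simp only [e11] at h12
    have h23 := hdeg 2; simp only [e21] at h23
    have h34 := hdeg 3; simp only [e31] at h34
    exact key5 htree (hsubT 0) (hsubT 1) (hsubT 2) (hsubT 3) (hsubT 4)
      (hconn 0) (hconn 1) (hconn 2) (hconn 3) (hconn 4) h12 h23 h34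
      hi01 hi12 hi23 hi34 hi40 hd02 hd13 hd24 hd30
  -- there is a pair of chords sharing a vertex
  obtain ⟨i0, hi0⟩ := hRL1
  have hpair : ∃ i : ZMod 5, G.Adj i (i + 2) ∧ G.Adj (i + 2) (i + 4) := by
    rcases hRL2 i0 hi0 with h | h
    · exact ⟨i0, hi0, h⟩
    · refine ⟨i0 + 3, ?_, ?_⟩
      · rw [z332]; exact h
      · rw [z332, z334]; exact hi0
  obtain ⟨i, hA1, hA2⟩ := hpair
  -- exclusions of the other chords
  have hn3 : ¬ G.Adj (i + 3) i := by
    intro h3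
    apply hP2' (i + 2)
    refine ⟨?_, ?_, ?_⟩
    · rw [z222]; exact hA2
    · rw [z221, z332]; exact h3
    · rw [z23]; exact hA1
  have hn4 : ¬ G.Adj (i + 4) (i + 1) := by
    intro h4
    apply hP2' (i + 4)
    refine ⟨?_, ?_, ?_⟩
    · rw [z442]; exact h4
    · rw [z441]; exact hA1
    · rw [z43, z222]; exact hA2
  have hn1 : ¬ G.Adj (i + 1) (i + 3) := by
    intro h1
    rcases hRL2 (i + 1) (by rw [z12]; exact h1) with h | h
    · rw [z12, z14] at h
      exact hn3 h
    · rw [z13] at h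
      exact hn4 h
  -- chords are exactly i and i+2
  have honly : ∀ x : ZMod 5, G.Adj x (x + 2) → x = i ∨ x = i + 2 := by
    intro x hx
    have h5 : x = i ∨ x = i + 1 ∨ x = i + 2 ∨ x = i + 3 ∨ x = i + 4 :=
      (by decide : ∀ a b : ZMod 5, a = b ∨ a = b + 1 ∨ a = b + 2 ∨ a = b + 3 ∨ a = b + 4) x i
    rcases h5 with rfl | rfl | rfl | rfl | rfl
    · exact Or.inl rfl
    · exact absurd (by rwa [z12] at hx) hn1
    · exact Or.inr rfl
    · exact absurd (by rwa [z332] at hx) hn3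
    · exact absurd (by rwa [z442] at hx) hn4
  have hclass : ∀ x y : ZMod 5, x ≠ y → (y = x + 1 ∨ x = y + 1) ∨ y = x + 2 ∨ x = y + 2 := by
    decide
  refine ⟨i + 2, fun x y => ?_⟩
  constructor
  · intro hxy
    have hne := hxy.ne
    rcases hclass x y hne with hcyc | hy2 | hx2
    · left
      rw [cycleG, SimpleGraph.fromRel_adj]
      exact ⟨hne, hcyc⟩
    · subst hy2
      rcases honly x hxy with rfl | rfl
      · right; right
        rw [z23]
        exact Sym2.eq_swap
      · right; left
        rfl
    · subst hx2
      have hyadj : G.Adj y (y + 2) := hxy.symm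
      rcases honly y hyadj with rfl | rfl
      · right; right
        rw [z23]
      · right; left
        exact Sym2.eq_swap
  · intro hr
    rcases hr with hcyc | he | he
    · exact hC hcyc
    · have hadj : G.Adj (i + 2) (i + 2 + 2) := by rw [z222]; exact hA2
      rw [← SimpleGraph.mem_edgeSet, he, SimpleGraph.mem_edgeSet]
      exact hadj
    · have hadj : G.Adj (i + 2) (i + 2 + 3) := by rw [z23]; exact hA1.symm
      rw [← SimpleGraph.mem_edgeSet, he, SimpleGraph.mem_edgeSet]
      exact hadj

end ENPT
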